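/- arXiv:2303.08881 — 5 statements merged into one kernel-verified Lean document; each statement's English description precedes it below -/
import Mathlib

section
/- (Proposition 2.1, part 1.) Suppose A is SPD. For every n×n2 block matrix P of the form P = [W; I] (arbitrary n1×n2 top block W, identity n2×n2 bottom block), one has (I − Q_A)·P = P⋆, where Q_A = G·B⁻¹·Gᵀ·A. That is, the ideal interpolation P⋆ is obtained from any such P by the A-orthogonal projection onto the A-orthogonal complement of the range of G. -/
open Matrix

lemma posdef_block11 {n1 n2 : ℕ} {B : Matrix (Fin n1) (Fin n1) ℝ}
    {F : Matrix (Fin n1) (Fin n2) ℝ} {E : Matrix (Fin n2) (Fin n1) ℝ}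
    {C : Matrix (Fin n2) (Fin n2) ℝ}
    (h : (Matrix.fromBlocks B F E C).PosDef) : B.PosDef := by
  rw [posDef_iff_dotProduct_mulVec]
  constructor
  · have hH := h.1
    have := congrArg Matrix.toBlocks₁₁ hH
    simp [Matrix.IsHermitian, Matrix.toBlocks₁₁, Matrix.fromBlocks,
      Matrix.conjTranspose, Matrix.transpose] at this
    show Bᴴ = B
    ext i j
    simpa using congrFun (congrFun this i) j
  · intro x hx
    have hx' : (Sum.elim x (0 : Fin n2 → ℝ)) ≠ 0 := by
      intro h0
      apply hx
      funext i
      exact congrFun h0 (Sum.inl i)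
    have := (posDef_iff_dotProduct_mulVec.mp h).2 hx'
    simpa [Matrix.fromBlocks_mulVec, dotProduct] using this

/-- Proposition 2.1 (part 1): for SPD `A`, the ideal interpolation `P⋆` is obtained from
any `P = [W; I]` by the `A`-orthogonal projection `I - Q_A` where `Q_A = G B⁻¹ Gᵀ A`:
`(I - Q_A) P = P⋆`. -/
theorem stmt_3 (n1 n2 : ℕ) (hn1 : 0 < n1) (hn2 : 0 < n2)
    (B : Matrix (Fin n1) (Fin n1) ℝ) (F : Matrix (Fin n1) (Fin n2) ℝ)
    (E : Matrix (Fin n2) (Fin n1) ℝ) (C : Matrix (Fin n2) (Fin n2) ℝ)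
    (A : Matrix (Fin n1 ⊕ Fin n2) (Fin n1 ⊕ Fin n2) ℝ) (hA : A = Matrix.fromBlocks B F E C)
    (hSPD : A.PosDef)
    (G : Matrix (Fin n1 ⊕ Fin n2) (Fin n1) ℝ)
    (hG : G = Matrix.fromRows (1 : Matrix (Fin n1) (Fin n1) ℝ) (0 : Matrix (Fin n2) (Fin n1) ℝ))
    (QA : Matrix (Fin n1 ⊕ Fin n2) (Fin n1 ⊕ Fin n2) ℝ)
    (hQ : QA = G * B⁻¹ * Gᵀ * A)
    (Pstar : Matrix (Fin n1 ⊕ Fin n2) (Fin n2) ℝ)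
    (hP : Pstar = Matrix.fromRows (-(B⁻¹ * F)) (1 : Matrix (Fin n2) (Fin n2) ℝ)) :
    ∀ W : Matrix (Fin n1) (Fin n2) ℝ,
      (1 - QA) * Matrix.fromRows W (1 : Matrix (Fin n2) (Fin n2) ℝ) = Pstar := by
  intro W
  have hB : B.PosDef := posdef_block11 (hA ▸ hSPD)
  have hBinv : B⁻¹ * B = 1 := Matrix.nonsing_inv_mul B (isUnit_iff_ne_zero.mpr hB.det_pos.ne')
  subst hA hG hQ hP
  rw [Matrix.sub_mul, Matrix.one_mul]
  rw [Matrix.transpose_fromRows]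
  rw [Matrix.mul_assoc _ _ (Matrix.fromRows W 1), Matrix.mul_assoc _ _ (Matrix.fromBlocks B F E C * _)]
  rw [Matrix.fromBlocks_mul_fromRows, Matrix.fromCols_mul_fromRows]
  simp only [Matrix.transpose_one, Matrix.transpose_zero, Matrix.one_mul, Matrix.zero_mul,
    Matrix.mul_one, add_zero, zero_add]
  rw [Matrix.mul_add, ← Matrix.mul_assoc _ B W, Matrix.mul_assoc (Matrix.fromRows 1 0) B⁻¹ B, hBinv, Matrix.mul_one, Matrix.mul_assoc (Matrix.fromRows 1 0) B⁻¹ F]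
  rw [Matrix.fromRows_mul]
  simp only [Matrix.one_mul, Matrix.zero_mul]
  ext (i | i) j <;>
    simp [Matrix.fromRows_apply_inl, Matrix.fromRows_apply_inr, Matrix.sub_apply,
      Matrix.add_apply, Matrix.neg_apply]
end

section
/- (Pythagorean identity in the proof of Proposition 2.1.) Suppose A is SPD and let Q_A = G·B⁻¹·Gᵀ·A. For every n×n2 block matrix P of the form P = [W; I] (arbitrary n1×n2 top block W, identity n2×n2 bottom block) and every vector v ∈ ℝ^{n2}: (P·v)ᵀ·A·(P·v) = (P⋆·v)ᵀ·A·(P⋆·v) + (Q_A·P·v)ᵀ·A·(Q_A·P·v), i.e. ‖Pv‖²_A = ‖P⋆v‖²_A + ‖Q_A P v‖²_A. -/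
open Matrix

/-- Pythagorean identity in the proof of Proposition 2.1: for SPD `A`, any `P = [W; I]`
and any `v`, `‖Pv‖²_A = ‖P⋆v‖²_A + ‖Q_A P v‖²_A`, where `Q_A = G B⁻¹ Gᵀ A`. -/
theorem stmt_4 (n1 n2 : ℕ) (hn1 : 0 < n1) (hn2 : 0 < n2)
    (B : Matrix (Fin n1) (Fin n1) ℝ) (F : Matrix (Fin n1) (Fin n2) ℝ)
    (E : Matrix (Fin n2) (Fin n1) ℝ) (C : Matrix (Fin n2) (Fin n2) ℝ)
    (A : Matrix (Fin n1 ⊕ Fin n2) (Fin n1 ⊕ Fin n2) ℝ) (hA : A = Matrix.fromBlocks B F E C)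
    (hSPD : A.PosDef)
    (G : Matrix (Fin n1 ⊕ Fin n2) (Fin n1) ℝ)
    (hG : G = Matrix.fromRows (1 : Matrix (Fin n1) (Fin n1) ℝ) (0 : Matrix (Fin n2) (Fin n1) ℝ))
    (QA : Matrix (Fin n1 ⊕ Fin n2) (Fin n1 ⊕ Fin n2) ℝ)
    (hQ : QA = G * B⁻¹ * Gᵀ * A)
    (Pstar : Matrix (Fin n1 ⊕ Fin n2) (Fin n2) ℝ)
    (hP : Pstar = Matrix.fromRows (-(B⁻¹ * F)) (1 : Matrix (Fin n2) (Fin n2) ℝ)) :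
    ∀ (W : Matrix (Fin n1) (Fin n2) ℝ) (v : Fin n2 → ℝ),
      (Matrix.fromRows W (1 : Matrix (Fin n2) (Fin n2) ℝ) *ᵥ v) ⬝ᵥ
          (A *ᵥ (Matrix.fromRows W (1 : Matrix (Fin n2) (Fin n2) ℝ) *ᵥ v)) =
        (Pstar *ᵥ v) ⬝ᵥ (A *ᵥ (Pstar *ᵥ v)) +
          (QA *ᵥ (Matrix.fromRows W (1 : Matrix (Fin n2) (Fin n2) ℝ) *ᵥ v)) ⬝ᵥ
            (A *ᵥ (QA *ᵥ (Matrix.fromRows W (1 : Matrix (Fin n2) (Fin n2) ℝ) *ᵥ v))) := by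
  intro W v
  -- symmetry of A and its blocks
  have hsym : Aᵀ = A := by
    rw [← Matrix.conjTranspose_eq_transpose_of_trivial]
    exact hSPD.isHermitian
  have hsym' : (Matrix.fromBlocks B F E C)ᵀ = Matrix.fromBlocks B F E C := by
    rw [← hA]; exact hsym
  rw [Matrix.fromBlocks_transpose] at hsym'
  have hBsym : Bᵀ = B := by
    have := congrArg Matrix.toBlocks₁₁ hsym'; simpa using this
  have hEF : Eᵀ = F := by
    have := congrArg Matrix.toBlocks₁₂ hsym'; simpa using this
  -- B is positive definite
  have hBpd : B.PosDef := by
    refine Matrix.PosDef.of_dotProduct_mulVec_pos ?_ ?_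
    · rw [Matrix.IsHermitian, Matrix.conjTranspose_eq_transpose_of_trivial]; exact hBsym
    · intro x hx
      have hx' : Sum.elim x (0 : Fin n2 → ℝ) ≠ 0 := by
        intro h
        apply hx
        funext i
        have := congrFun h (Sum.inl i)
        simpa using this
      have := hSPD.dotProduct_mulVec_pos hx'
      rw [hA] at this
      simpa [Matrix.fromBlocks_mulVec, dotProduct, Fintype.sum_sum_type] using this
  have hdet : IsUnit B.det := isUnit_iff_ne_zero.mpr hBpd.det_pos.ne'
  have hBBinv : B * B⁻¹ = 1 := Matrix.mul_nonsing_inv B hdet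
  have hBinvB : B⁻¹ * B = 1 := Matrix.nonsing_inv_mul B hdet
  -- notation
  set w : Fin n1 → ℝ := W *ᵥ v with hw
  set u : Fin n1 → ℝ := B⁻¹ *ᵥ (F *ᵥ v) with hu
  -- P v and Pstar v
  have hPv : Matrix.fromRows W (1 : Matrix (Fin n2) (Fin n2) ℝ) *ᵥ v = Sum.elim w v := by
    simp [hw]
  have hPsv : Pstar *ᵥ v = Sum.elim (-u) v := by
    simp [hP, hu, Matrix.neg_mulVec, Matrix.mulVec_mulVec]
  -- B *ᵥ u = F *ᵥ v
  have hBu : B *ᵥ u = F *ᵥ v := by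
    rw [hu, Matrix.mulVec_mulVec, hBBinv, Matrix.one_mulVec]
  -- A *ᵥ (Sum.elim a b)
  have hAmul : ∀ (a : Fin n1 → ℝ) (b : Fin n2 → ℝ),
      A *ᵥ Sum.elim a b = Sum.elim (B *ᵥ a + F *ᵥ b) (E *ᵥ a + C *ᵥ b) := by
    intro a b
    rw [hA, Matrix.fromBlocks_mulVec]
    congr 1
  -- Gᵀ *ᵥ (Sum.elim a b) = a
  have hGT : ∀ (a : Fin n1 → ℝ) (b : Fin n2 → ℝ), Gᵀ *ᵥ Sum.elim a b = a := by
    intro a b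
    rw [hG, Matrix.transpose_fromRows]
    ext i
    simp [Matrix.mulVec, dotProduct, Fintype.sum_sum_type, Matrix.fromCols,
      Matrix.one_apply]
  -- QA *ᵥ (P v) = Sum.elim (w + u) 0
  have hQPv : QA *ᵥ (Matrix.fromRows W (1 : Matrix (Fin n2) (Fin n2) ℝ) *ᵥ v)
      = Sum.elim (w + u) 0 := by
    rw [hPv, hQ]
    rw [show G * B⁻¹ * Gᵀ * A = G * (B⁻¹ * (Gᵀ * A)) by rw [Matrix.mul_assoc, Matrix.mul_assoc]]
    rw [← Matrix.mulVec_mulVec, ← Matrix.mulVec_mulVec, ← Matrix.mulVec_mulVec]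
    rw [hAmul, hGT]
    have : B⁻¹ *ᵥ (B *ᵥ w + F *ᵥ v) = w + u := by
      rw [Matrix.mulVec_add, Matrix.mulVec_mulVec, hBinvB, Matrix.one_mulVec, hu]
    rw [this, hG]
    ext (i | i) <;>
      simp [Matrix.fromRows_apply_inl, Matrix.fromRows_apply_inr, Matrix.mulVec, dotProduct, Matrix.one_apply]
  -- key scalar facts
  have dotB : ∀ (a b : Fin n1 → ℝ), a ⬝ᵥ (B *ᵥ b) = b ⬝ᵥ (B *ᵥ a) := by
    intro a b
    rw [Matrix.dotProduct_mulVec, ← Matrix.mulVec_transpose, hBsym, dotProduct_comm]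
  have dotE : ∀ (b : Fin n2 → ℝ) (a : Fin n1 → ℝ), b ⬝ᵥ (E *ᵥ a) = a ⬝ᵥ (F *ᵥ b) := by
    intro b a
    rw [Matrix.dotProduct_mulVec, ← Matrix.mulVec_transpose, hEF, dotProduct_comm]
  -- expand everything
  rw [hQPv, hPv, hPsv, hAmul, hAmul, hAmul]
  simp only [sumElim_dotProduct_sumElim, Matrix.mulVec_neg, Matrix.mulVec_zero,
    add_zero, zero_add, dotProduct_add, dotProduct_neg, neg_dotProduct,
    zero_dotProduct, dotProduct_zero, Matrix.mulVec_add, hBu]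
  have h1 : w ⬝ᵥ (F *ᵥ v) = u ⬝ᵥ (B *ᵥ w) := by
    rw [← hBu, dotB]
  have h2 : v ⬝ᵥ (E *ᵥ u) = u ⬝ᵥ (F *ᵥ v) := dotE v u
  have h3 : u ⬝ᵥ (F *ᵥ v) = u ⬝ᵥ (B *ᵥ u) := by rw [← hBu]
  have h4 : w ⬝ᵥ (B *ᵥ u) = u ⬝ᵥ (B *ᵥ w) := dotB w u
  simp only [add_dotProduct]
  linarith [h1, h2, h3, h4, dotE v w, dotE v u]
end

section
/- (Proposition 2.1, part 2: energy-norm minimality of the ideal interpolation.) Suppose A is SPD. For every n×n2 block matrix P of the form P = [W; I] (arbitrary n1×n2 top block W, identity n2×n2 bottom block) and every vector v ∈ ℝ^{n2}: (P·v)ᵀ·A·(P·v) ≥ (P⋆·v)ᵀ·A·(P⋆·v), i.e. ‖Pv‖_A ≥ ‖P⋆v‖_A; hence ‖P‖_A ≥ ‖P⋆‖_A for all such P. -/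
open Matrix

/-- Proposition 2.1 (part 2): energy-norm minimality of the ideal interpolation. For SPD `A`,
any `P = [W; I]` and any `v`: `‖Pv‖²_A ≥ ‖P⋆v‖²_A`, hence `‖Pv‖_A ≥ ‖P⋆v‖_A`. -/
theorem stmt_5 (n1 n2 : ℕ) (hn1 : 0 < n1) (hn2 : 0 < n2)
    (B : Matrix (Fin n1) (Fin n1) ℝ) (F : Matrix (Fin n1) (Fin n2) ℝ)
    (E : Matrix (Fin n2) (Fin n1) ℝ) (C : Matrix (Fin n2) (Fin n2) ℝ)
    (A : Matrix (Fin n1 ⊕ Fin n2) (Fin n1 ⊕ Fin n2) ℝ) (hA : A = Matrix.fromBlocks B F E C)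
    (hSPD : A.PosDef)
    (Pstar : Matrix (Fin n1 ⊕ Fin n2) (Fin n2) ℝ)
    (hP : Pstar = Matrix.fromRows (-(B⁻¹ * F)) (1 : Matrix (Fin n2) (Fin n2) ℝ)) :
    ∀ (W : Matrix (Fin n1) (Fin n2) ℝ) (v : Fin n2 → ℝ),
      (Pstar *ᵥ v) ⬝ᵥ (A *ᵥ (Pstar *ᵥ v)) ≤
        (Matrix.fromRows W (1 : Matrix (Fin n2) (Fin n2) ℝ) *ᵥ v) ⬝ᵥ
          (A *ᵥ (Matrix.fromRows W (1 : Matrix (Fin n2) (Fin n2) ℝ) *ᵥ v)) ∧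
      Real.sqrt ((Pstar *ᵥ v) ⬝ᵥ (A *ᵥ (Pstar *ᵥ v))) ≤
        Real.sqrt ((Matrix.fromRows W (1 : Matrix (Fin n2) (Fin n2) ℝ) *ᵥ v) ⬝ᵥ
          (A *ᵥ (Matrix.fromRows W (1 : Matrix (Fin n2) (Fin n2) ℝ) *ᵥ v))) := by
  intro W v
  -- B is positive definite, hence invertible
  have hBher : B.IsHermitian := by
    have h := hSPD.isHermitian
    rw [hA, Matrix.isHermitian_fromBlocks_iff] at h
    exact h.1
  have hBpd : B.PosDef := by
    refine .of_dotProduct_mulVec_pos hBher fun x hx => ?_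
    have hne : Sum.elim x (0 : Fin n2 → ℝ) ≠ 0 :=
      fun h => hx (funext fun i => congrFun h (Sum.inl i))
    have := hSPD.dotProduct_mulVec_pos hne
    simpa [hA, fromBlocks_mulVec, sumElim_dotProduct_sumElim] using this
  have hBB : B * B⁻¹ = 1 := Matrix.mul_nonsing_inv B ((Matrix.isUnit_iff_isUnit_det B).mp hBpd.isUnit)
  set xs : (Fin n1 ⊕ Fin n2) → ℝ := Pstar *ᵥ v with hxs
  set u : (Fin n1 ⊕ Fin n2) → ℝ := Sum.elim ((W + B⁻¹ * F) *ᵥ v) 0 with hu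
  have hsplit : Matrix.fromRows W (1 : Matrix (Fin n2) (Fin n2) ℝ) *ᵥ v = xs + u := by
    rw [hxs, hu, hP, fromRows_mulVec, fromRows_mulVec]
    funext i
    cases i with
    | inl i => simp [add_mulVec, neg_mulVec]
    | inr i => simp
  have hAxs : A *ᵥ xs = Sum.elim (0 : Fin n1 → ℝ) (E *ᵥ (-((B⁻¹ * F) *ᵥ v)) + C *ᵥ v) := by
    rw [hxs, hP, hA, fromRows_mulVec, fromBlocks_mulVec]
    have hBF : B *ᵥ (-((B⁻¹ * F) *ᵥ v)) = -(F *ᵥ v) := by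
      rw [mulVec_neg, mulVec_mulVec, ← Matrix.mul_assoc, hBB, Matrix.one_mul]
    funext i
    cases i with
    | inl i => simp [neg_mulVec, mulVec_neg, mulVec_mulVec, ← Matrix.mul_assoc, hBB]
    | inr i => simp [neg_mulVec, mulVec_neg, mulVec_mulVec, Matrix.mul_assoc]
  have hAsymm : Aᵀ = A := hSPD.isHermitian.eq
  have hcross1 : u ⬝ᵥ (A *ᵥ xs) = 0 := by
    rw [hAxs, hu, sumElim_dotProduct_sumElim]
    simp
  have hcross2 : xs ⬝ᵥ (A *ᵥ u) = 0 := by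
    rw [dotProduct_mulVec, ← mulVec_transpose, hAsymm, dotProduct_comm, hcross1]
  have huAu : 0 ≤ u ⬝ᵥ (A *ᵥ u) := by
    have := hSPD.posSemidef.dotProduct_mulVec_nonneg u
    simpa using this
  have key : xs ⬝ᵥ (A *ᵥ xs) ≤
      (Matrix.fromRows W (1 : Matrix (Fin n2) (Fin n2) ℝ) *ᵥ v) ⬝ᵥ
        (A *ᵥ (Matrix.fromRows W (1 : Matrix (Fin n2) (Fin n2) ℝ) *ᵥ v)) := by
    rw [hsplit, mulVec_add, dotProduct_add, add_dotProduct, add_dotProduct,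
      hcross1, hcross2]
    linarith
  exact ⟨key, Real.sqrt_le_sqrt key⟩
end

section
/- (Coarse operator identity R·A·P = L_S·U_S + R·H·P.) Suppose A = L·U + H, where L = Matrix.fromBlocks L_B 0 W̃ L_S is block lower triangular with L_B (n1×n1) invertible, U = Matrix.fromBlocks U_B Z̃ 0 U_S is block upper triangular with U_B (n1×n1) invertible, and H is an n×n matrix of dropped entries. Define R = [−W̃·L_B⁻¹ | I] (left block −W̃·L_B⁻¹, identity n2×n2 right block) and P = [−U_B⁻¹·Z̃; I] (top block −U_B⁻¹·Z̃, identity bottom block). Then R·A·P = L_S·U_S + R·H·P. -/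
open Matrix

/-- Coarse operator identity: if `A = LU + H` with block triangular ILU factors
`L = [L_B 0; W̃ L_S]`, `U = [U_B Z̃; 0 U_S]`, and `R = [-W̃ L_B⁻¹ | I]`,
`P = [-U_B⁻¹ Z̃; I]`, then `R A P = L_S U_S + R H P`. -/
theorem stmt_14 (n1 n2 : ℕ) (hn1 : 0 < n1) (hn2 : 0 < n2)
    (A : Matrix (Fin n1 ⊕ Fin n2) (Fin n1 ⊕ Fin n2) ℝ)
    (LB UB : Matrix (Fin n1) (Fin n1) ℝ) (hLB : IsUnit LB) (hUB : IsUnit UB)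
    (Wtilde : Matrix (Fin n2) (Fin n1) ℝ) (Ztilde : Matrix (Fin n1) (Fin n2) ℝ)
    (LS US : Matrix (Fin n2) (Fin n2) ℝ)
    (H : Matrix (Fin n1 ⊕ Fin n2) (Fin n1 ⊕ Fin n2) ℝ)
    (L : Matrix (Fin n1 ⊕ Fin n2) (Fin n1 ⊕ Fin n2) ℝ)
    (hL : L = Matrix.fromBlocks LB (0 : Matrix (Fin n1) (Fin n2) ℝ) Wtilde LS)
    (U : Matrix (Fin n1 ⊕ Fin n2) (Fin n1 ⊕ Fin n2) ℝ)
    (hU : U = Matrix.fromBlocks UB Ztilde (0 : Matrix (Fin n2) (Fin n1) ℝ) US)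
    (hA : A = L * U + H)
    (R : Matrix (Fin n2) (Fin n1 ⊕ Fin n2) ℝ)
    (hR : R = Matrix.fromCols (-(Wtilde * LB⁻¹)) (1 : Matrix (Fin n2) (Fin n2) ℝ))
    (P : Matrix (Fin n1 ⊕ Fin n2) (Fin n2) ℝ)
    (hP : P = Matrix.fromRows (-(UB⁻¹ * Ztilde)) (1 : Matrix (Fin n2) (Fin n2) ℝ)) :
    R * A * P = LS * US + R * H * P := by
  have hRL : R * L = Matrix.fromCols 0 LS := by
    rw [hR, hL, fromCols_mul_fromBlocks, Matrix.neg_mul, Matrix.mul_assoc,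
      Matrix.nonsing_inv_mul _ ((isUnit_iff_isUnit_det _).mp hLB)]
    simp
  have hUP : U * P = Matrix.fromRows 0 US := by
    rw [hU, hP, fromBlocks_mul_fromRows, Matrix.mul_neg, ← Matrix.mul_assoc,
      Matrix.mul_nonsing_inv _ ((isUnit_iff_isUnit_det _).mp hUB)]
    simp
  have key : R * (L * U) * P = LS * US := by
    calc R * (L * U) * P = (R * L) * (U * P) := by rw [Matrix.mul_assoc, Matrix.mul_assoc, Matrix.mul_assoc]
    _ = LS * US := by rw [hRL, hUP, fromCols_mul_fromRows]; simp
  rw [hA, Matrix.mul_add, Matrix.add_mul, key]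
end

section
/- (The MILU coarse preconditioner preserves the action on the constant vector: R·A·P·𝟙 = L_S·U_S·𝟙.) Suppose A = L·U + H, where L = Matrix.fromBlocks L_B 0 W̃ L_S with L_B (n1×n1) invertible, U = Matrix.fromBlocks U_B Z̃ 0 U_S with U_B (n1×n1) invertible, and H is an n×n matrix. Define R = [−W̃·L_B⁻¹ | I] and P = [−U_B⁻¹·Z̃; I]. If H·𝟙_n = 0 (the residual matrix annihilates the all-ones vector of length n) and P·𝟙_{n2} = 𝟙_n (the interpolation maps the all-ones vector of length n2 to the all-ones vector of length n), then R·A·P·𝟙_{n2} = L_S·U_S·𝟙_{n2}. -/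
open Matrix

/-- The MILU coarse preconditioner preserves the action on the constant vector: if
`A = LU + H` with block triangular factors, `R = [-W̃ L_B⁻¹ | I]`, `P = [-U_B⁻¹ Z̃; I]`,
`H 𝟙 = 0` and `P 𝟙 = 𝟙`, then `R A P 𝟙 = L_S U_S 𝟙`. -/
theorem stmt_15 (n1 n2 : ℕ) (hn1 : 0 < n1) (hn2 : 0 < n2)
    (A : Matrix (Fin n1 ⊕ Fin n2) (Fin n1 ⊕ Fin n2) ℝ)
    (LB UB : Matrix (Fin n1) (Fin n1) ℝ) (hLB : IsUnit LB) (hUB : IsUnit UB)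
    (Wtilde : Matrix (Fin n2) (Fin n1) ℝ) (Ztilde : Matrix (Fin n1) (Fin n2) ℝ)
    (LS US : Matrix (Fin n2) (Fin n2) ℝ)
    (H : Matrix (Fin n1 ⊕ Fin n2) (Fin n1 ⊕ Fin n2) ℝ)
    (L : Matrix (Fin n1 ⊕ Fin n2) (Fin n1 ⊕ Fin n2) ℝ)
    (hL : L = Matrix.fromBlocks LB (0 : Matrix (Fin n1) (Fin n2) ℝ) Wtilde LS)
    (U : Matrix (Fin n1 ⊕ Fin n2) (Fin n1 ⊕ Fin n2) ℝ)
    (hU : U = Matrix.fromBlocks UB Ztilde (0 : Matrix (Fin n2) (Fin n1) ℝ) US)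
    (hA : A = L * U + H)
    (R : Matrix (Fin n2) (Fin n1 ⊕ Fin n2) ℝ)
    (hR : R = Matrix.fromCols (-(Wtilde * LB⁻¹)) (1 : Matrix (Fin n2) (Fin n2) ℝ))
    (P : Matrix (Fin n1 ⊕ Fin n2) (Fin n2) ℝ)
    (hP : P = Matrix.fromRows (-(UB⁻¹ * Ztilde)) (1 : Matrix (Fin n2) (Fin n2) ℝ))
    (hHone : H *ᵥ (fun _ => (1 : ℝ)) = 0)
    (hPone : P *ᵥ (fun _ => (1 : ℝ)) = fun _ => (1 : ℝ)) :
    (R * A * P) *ᵥ (fun _ => (1 : ℝ)) = (LS * US) *ᵥ (fun _ => (1 : ℝ)) := by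
  have hRL : R * L = Matrix.fromCols 0 LS := by
    rw [hR, hL, fromCols_mul_fromBlocks]
    simp [Matrix.mul_assoc, Matrix.nonsing_inv_mul LB ((Matrix.isUnit_iff_isUnit_det LB).mp hLB)]
  have hUP : U * P = Matrix.fromRows 0 US := by
    rw [hU, hP, fromBlocks_mul_fromRows]
    simp [← Matrix.mul_assoc, Matrix.mul_nonsing_inv UB ((Matrix.isUnit_iff_isUnit_det UB).mp hUB)]
  have key : (R * A * P) *ᵥ (fun _ => (1 : ℝ))
      = (R * (L * U) * P) *ᵥ (fun _ => (1 : ℝ)) + R *ᵥ (H *ᵥ (P *ᵥ (fun _ => (1:ℝ)))) := by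
    rw [hA]
    simp [Matrix.add_mul, Matrix.mul_add, Matrix.add_mulVec, Matrix.mulVec_mulVec,
      Matrix.mul_assoc]
  rw [key, hPone, hHone]
  have : R * (L * U) * P = LS * US := by
    calc R * (L * U) * P = (R * L) * (U * P) := by simp [Matrix.mul_assoc]
    _ = Matrix.fromCols 0 LS * Matrix.fromRows 0 US := by rw [hRL, hUP]
    _ = LS * US := by rw [fromCols_mul_fromRows]; simp
  simp [this]
end
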